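/- There exists a constant C > 0 such that for all τ ∈ ℝ, all integers k, l ∈ ℤ, and all natural numbers m ≥ 1, setting Λ_m = k² + (m² + (m+1)²)/2, the complex number iτ + k² + l² − Λ_m is nonzero and |iτ + k² + l² − Λ_m|⁻¹ ≤ C / √(m² + τ²). -/

import Mathlib

/-- There is a constant `C > 0` such that for all `τ ∈ ℝ`, `k, l ∈ ℤ` and `m ≥ 1`,
with `Λ_m = k² + (m² + (m+1)²)/2`, the complex number `iτ + k² + l² − Λ_m` is
nonzero and `|iτ + k² + l² − Λ_m|⁻¹ ≤ C / √(m² + τ²)`. -/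
theorem resolvent_bound_sqrt :
    ∃ C : ℝ, 0 < C ∧ ∀ (τ : ℝ) (k l : ℤ) (m : ℕ), 1 ≤ m →
      (Complex.I * (τ : ℂ) + (k : ℂ) ^ 2 + (l : ℂ) ^ 2 -
          ((k : ℂ) ^ 2 + ((m : ℂ) ^ 2 + ((m : ℂ) + 1) ^ 2) / 2) ≠ 0) ∧
      (‖Complex.I * (τ : ℂ) + (k : ℂ) ^ 2 + (l : ℂ) ^ 2 -
          ((k : ℂ) ^ 2 + ((m : ℂ) ^ 2 + ((m : ℂ) + 1) ^ 2) / 2)‖)⁻¹ ≤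
        C / Real.sqrt ((m : ℝ) ^ 2 + τ ^ 2) := by
  refine ⟨1, one_pos, fun τ k l m hm => ?_⟩
  set a : ℝ := (l : ℝ) ^ 2 - ((m : ℝ) ^ 2 + ((m : ℝ) + 1) ^ 2) / 2 with hadef
  have hz : Complex.I * (τ : ℂ) + (k : ℂ) ^ 2 + (l : ℂ) ^ 2 -
      ((k : ℂ) ^ 2 + ((m : ℂ) ^ 2 + ((m : ℂ) + 1) ^ 2) / 2) = (a : ℂ) + τ * Complex.I := by
    rw [hadef]
    push_cast
    ring
  rw [hz]
  have habs : ‖(a : ℂ) + τ * Complex.I‖ = Real.sqrt (a ^ 2 + τ ^ 2) := by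
    rw [Complex.norm_def, Complex.normSq_apply]
    simp
    ring_nf
  -- key inequality: m^2 ≤ a^2
  have ha2 : (m : ℝ) ^ 2 ≤ a ^ 2 := by
    set n : ℕ := l.natAbs with hn
    have hl2 : (l : ℝ) ^ 2 = (n : ℝ) ^ 2 := by
      rw [hn]
      push_cast [Nat.cast_natAbs]
      rw [sq_abs]
    have hm0 : (0 : ℝ) ≤ (m : ℝ) := Nat.cast_nonneg m
    rcases le_or_gt n m with h | h
    · have h1 : (n : ℝ) ≤ (m : ℝ) := by exact_mod_cast h
      have hn0 : (0 : ℝ) ≤ (n : ℝ) := Nat.cast_nonneg n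
      have h2 : (m : ℝ) ≤ -a := by
        rw [hadef, hl2]; nlinarith
      calc (m : ℝ) ^ 2 ≤ (-a) ^ 2 := pow_le_pow_left₀ hm0 h2 2
        _ = a ^ 2 := by ring
    · have h1 : (m : ℝ) + 1 ≤ (n : ℝ) := by exact_mod_cast h
      have h2 : (m : ℝ) ≤ a := by
        rw [hadef, hl2]; nlinarith
      exact pow_le_pow_left₀ hm0 h2 2
  have hm1 : (1 : ℝ) ≤ (m : ℝ) := by exact_mod_cast hm
  have hmt : (0 : ℝ) < (m : ℝ) ^ 2 + τ ^ 2 := by positivity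
  have hsq : Real.sqrt ((m : ℝ) ^ 2 + τ ^ 2) ≤ ‖(a : ℂ) + τ * Complex.I‖ := by
    rw [habs]
    exact Real.sqrt_le_sqrt (by linarith)
  have hs0 : 0 < Real.sqrt ((m : ℝ) ^ 2 + τ ^ 2) := Real.sqrt_pos.mpr hmt
  have hz0 : (0 : ℝ) < ‖(a : ℂ) + τ * Complex.I‖ := lt_of_lt_of_le hs0 hsq
  refine ⟨fun h => ?_, ?_⟩
  · rw [h] at hz0; simp at hz0
  · rw [one_div]
    exact inv_anti₀ hs0 hsq
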